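/- Let K be a number field with unit rank r ≥ 1 that is totally real or a CM field. Then ρ_∞(K) ≥ (1/2)·log((1+√5)/2). -/

import Mathlib

open NumberField

/-- The logarithmic embedding of a unit: the coordinate at an infinite place `w`
is `mult w * log (w x)`. -/
noncomputable def logEmb (K : Type) [Field K] [NumberField K] (u : (𝓞 K)ˣ) :
    NumberField.InfinitePlace K → ℝ :=
  fun w => (w.mult : ℝ) * Real.log (w ((u : 𝓞 K) : K))

/-- The covering radius `ρ_∞(K)` of the lattice of units with respect to the sup norm. -/
noncomputable def rhoInf (K : Type) [Field K] [NumberField K] : ℝ :=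
  ⨆ v : {v : NumberField.InfinitePlace K → ℝ // ∑ w, v w = 0},
    ⨅ u : (𝓞 K)ˣ, ‖(v : NumberField.InfinitePlace K → ℝ) - logEmb K u‖

/-- A number field is totally real if all its infinite places are real. -/
def IsTotallyRealField (K : Type) [Field K] : Prop :=
  ∀ v : NumberField.InfinitePlace K, v.IsReal

/-- A CM field: a totally imaginary number field which is a quadratic extension of a
totally real subfield. -/
def IsCMField (K : Type) [Field K] : Prop :=
  (∀ v : NumberField.InfinitePlace K, v.IsComplex) ∧
  ∃ F : Subfield K, IsTotallyRealField F ∧ Module.finrank F K = 2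

section Aux

open NumberField.InfinitePlace


noncomputable def gr : ℝ := (1 + Real.sqrt 5) / 2

lemma gr_pos : 0 < gr := by
  have := Real.sqrt_nonneg 5; unfold gr; linarith

lemma gr_gt_one : 1 < gr := by
  have h5 : Real.sqrt 5 ^ 2 = 5 := Real.sq_sqrt (by norm_num)
  have h0 := Real.sqrt_nonneg 5
  have : 2 < Real.sqrt 5 := by nlinarith
  unfold gr; linarith

lemma gr_sq : gr ^ 2 = gr + 1 := by
  have h5 : Real.sqrt 5 ^ 2 = 5 := Real.sq_sqrt (by norm_num)
  unfold gr; nlinarith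

lemma abs_sub_inv_lt {x : ℝ} (hx : x ≠ 0) (h1 : |x| < gr) (h2 : 1 < gr * |x|) :
    |x - x⁻¹| < 1 := by
  have key : ∀ a : ℝ, 0 < a → a < gr → 1 < gr * a → |a - a⁻¹| < 1 := by
    intro a ha hag hga
    have hg1 := gr_gt_one
    have hsq := gr_sq
    have hga' : gr - 1 < a := by
      have h : gr * (gr - 1) = 1 := by nlinarith
      nlinarith
    rw [abs_lt]
    constructor
    · have h : a * (a - a⁻¹ + 1) = a ^ 2 + a - 1 := by field_simp; ring
      have h2 : 0 < a ^ 2 + a - 1 := by nlinarith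
      nlinarith
    · have h : a * (1 - (a - a⁻¹)) = 1 + a - a ^ 2 := by field_simp; ring
      have h2 : 0 < 1 + a - a ^ 2 := by nlinarith
      nlinarith
  rcases lt_or_gt_of_ne hx with hneg | hpos
  · have := key (-x) (by linarith) (by rwa [abs_of_neg hneg] at h1)
      (by rwa [abs_of_neg hneg] at h2)
    have heq : -(x - x⁻¹) = -x - (-x)⁻¹ := by rw [inv_neg]; ring
    rw [← abs_neg, heq]
    exact this
  · have := key x hpos (by rwa [abs_of_pos hpos] at h1) (by rwa [abs_of_pos hpos] at h2)
    exact this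

lemma log_window {a : ℝ} (ha : 0 < a) (h : |Real.log a| < Real.log gr) :
    a < gr ∧ 1 < gr * a := by
  obtain ⟨hl, hr⟩ := abs_lt.1 h
  constructor
  · exact (Real.log_lt_log_iff ha gr_pos).1 hr
  · have h1 : 0 < Real.log gr + Real.log a := by linarith
    rw [← Real.log_mul (ne_of_gt gr_pos) (ne_of_gt ha)] at h1
    exact (Real.log_pos_iff (mul_pos gr_pos ha).le).1 h1

variable {K : Type} [Field K] [NumberField K]

lemma coe_inv_unit (s : (𝓞 K)ˣ) :
    (((s⁻¹ : (𝓞 K)ˣ) : 𝓞 K) : K) = (((s : 𝓞 K) : K))⁻¹ := by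
  have h : ((s : 𝓞 K) * ((s⁻¹ : (𝓞 K)ˣ) : 𝓞 K)) = 1 := by
    rw [← Units.val_mul, mul_inv_cancel, Units.val_one]
  have h2 : (((s : 𝓞 K) : K)) * (((s⁻¹ : (𝓞 K)ˣ) : 𝓞 K) : K) = 1 := by
    rw [← map_mul (algebraMap (𝓞 K) K)] at *
    rw [show ((s : 𝓞 K) * ((s⁻¹ : (𝓞 K)ˣ) : 𝓞 K)) = 1 from h]
    simp
  exact eq_inv_of_mul_eq_one_left (by linear_combination h2)

lemma coe_unit_ne_zero (s : (𝓞 K)ˣ) : (((s : 𝓞 K) : K)) ≠ 0 := by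
  simpa using RingOfIntegers.coe_ne_zero_iff.mpr s.ne_zero

lemma core (s : (𝓞 K)ˣ)
    (h1 : ∀ w : InfinitePlace K, (embedding w (((s : 𝓞 K) : K))).im = 0)
    (h2 : ∀ w : InfinitePlace K, w (((s : 𝓞 K) : K)) < gr ∧ 1 < gr * w (((s : 𝓞 K) : K))) :
    ∀ w : InfinitePlace K, w (((s : 𝓞 K) : K)) = 1 := by
  set β : 𝓞 K := (s : 𝓞 K) - ((s⁻¹ : (𝓞 K)ˣ) : 𝓞 K) with hβ
  have hβlt : ∀ w : InfinitePlace K, w ((β : 𝓞 K) : K) < 1 := by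
    intro w
    set z : ℂ := embedding w (((s : 𝓞 K) : K)) with hz
    have hz0 : z ≠ 0 := by
      rw [hz]; exact map_ne_zero _ |>.mpr (coe_unit_ne_zero s)
    have hzre : z = (z.re : ℂ) := Complex.ext rfl (by simpa using h1 w)
    have habs : |z.re| = w (((s : 𝓞 K) : K)) := by
      rw [← norm_embedding_eq, ← hz, hzre]
      simp
    have hre0 : z.re ≠ 0 := by
      intro h; apply hz0; rw [hzre, h]; simp
    have hcoe : ((β : 𝓞 K) : K) = ((s : 𝓞 K) : K) - (((s : 𝓞 K) : K))⁻¹ := by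
      rw [hβ, ← coe_inv_unit]
      push_cast
      ring
    have hemb : embedding w ((β : 𝓞 K) : K) = ((z.re - (z.re)⁻¹ : ℝ) : ℂ) := by
      rw [hcoe, map_sub, map_inv₀, ← hz]
      rw [Complex.ofReal_sub, Complex.ofReal_inv]
      rw [← hzre]
    rw [← norm_embedding_eq, hemb]
    rw [Complex.norm_real]
    have := h2 w
    exact abs_sub_inv_lt hre0 (habs ▸ this.1) (habs ▸ this.2)
  have hβ0 : β = 0 := by
    by_contra hne
    have w0 : InfinitePlace K := Classical.arbitrary _
    have h1le := one_le_of_lt_one (w := w0) hne (fun z _ => hβlt z)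
    exact absurd (hβlt w0) (not_lt.mpr h1le)
  have hss : s * s = 1 := by
    have : (s : 𝓞 K) = ((s⁻¹ : (𝓞 K)ˣ) : 𝓞 K) := by
      rwa [hβ, sub_eq_zero] at hβ0
    have : s = s⁻¹ := Units.ext this
    rw [← mul_inv_cancel s, ← this]
  intro w
  have : w (((s : 𝓞 K) : K)) * w (((s : 𝓞 K) : K)) = 1 := by
    rw [← map_mul, ← map_mul (algebraMap (𝓞 K) K), ← Units.val_mul, hss]
    simp
  have hnn := apply_nonneg w (((s : 𝓞 K) : K))
  nlinarith

lemma cm_normal {K : Type} [Field K] [NumberField K] (F : Subfield K)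
    (hd : Module.finrank F K = 2) : Normal F K := by
  have : Module.Finite F K := Module.finite_of_finrank_eq_succ (by rw [hd])
  rw [normal_iff]
  intro x
  have hint : IsIntegral F x := IsIntegral.of_finite F x
  refine ⟨hint, ?_⟩
  set p := (minpoly F x).map (algebraMap F K) with hp
  have hp0 : p ≠ 0 := ((minpoly.monic hint).map _).ne_zero
  have hroot : p.IsRoot x := by
    rw [hp]
    simpa using minpoly.aeval F x
  obtain ⟨q, hq⟩ := Polynomial.dvd_iff_isRoot.mpr hroot
  rw [hq]
  refine Polynomial.Splits.mul (Polynomial.Splits.X_sub_C _) ?_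
  have hq0 : q ≠ 0 := by
    intro h; rw [h, mul_zero] at hq; exact hp0 hq
  refine Polynomial.Splits.of_natDegree_le_one ?_
  have hdeg : p.natDegree ≤ 2 := by
    rw [hp, Polynomial.natDegree_map]
    exact hd ▸ minpoly.natDegree_le x
  have := Polynomial.natDegree_mul (p := Polynomial.X - Polynomial.C x) (q := q)
    (Polynomial.X_sub_C_ne_zero x) hq0
  rw [← hq, Polynomial.natDegree_X_sub_C] at this
  omega

open NumberField.ComplexEmbedding in
lemma cm_exists_conj {K : Type} [Field K] [NumberField K] (hCM : _root_.IsCMField K) :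
    ∃ c : K →+* K, ∀ σ : K →+* ℂ, ∀ x : K, (starRingEnd ℂ) (σ x) = σ (c x) := by
  obtain ⟨hC, F, hF, hd⟩ := hCM
  have hfin : Module.Finite F K := Module.finite_of_finrank_eq_succ (by rw [hd])
  have : CharZero F := SubsemiringClass.instCharZero F
  have hsep : Algebra.IsSeparable F K := inferInstance
  have hnorm : Normal F K := cm_normal F hd
  have hgal : IsGalois F K := ⟨⟩
  -- every embedding of F into ℂ is real-valued
  have hFreal : ∀ ψ : F →+* ℂ, ComplexEmbedding.IsReal ψ := fun ψ =>
    NumberField.InfinitePlace.isReal_mk_iff.mp (hF _)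
  -- no embedding of K is real
  have hKnotreal : ∀ σ : K →+* ℂ, ¬ ComplexEmbedding.IsReal σ := fun σ h =>
    (NumberField.InfinitePlace.not_isReal_iff_isComplex.mpr (hC _))
      (NumberField.InfinitePlace.isReal_mk_iff.mpr h)
  -- pick an embedding of K
  obtain ⟨σ₀⟩ : Nonempty (K →+* ℂ) := inferInstance
  have hagree : σ₀.comp (algebraMap F K) = (conjugate σ₀).comp (algebraMap F K) := by
    have := hFreal (σ₀.comp (algebraMap F K))
    rw [ComplexEmbedding.isReal_iff] at this
    ext x
    exact (RingHom.congr_fun this x).symm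
  obtain ⟨τ, hτ⟩ := exists_comp_symm_eq_of_comp_eq σ₀ (conjugate σ₀) hagree
  set c : K ≃ₐ[F] K := τ.symm with hcdef
  have hc0 : σ₀.comp (c : K →+* K) = conjugate σ₀ := by
    rw [hcdef]; exact hτ
  have hcne : (c : K →+* K) ≠ RingHom.id K := by
    intro h
    apply hKnotreal σ₀
    rw [ComplexEmbedding.isReal_iff, ← hc0, h]
    ext x; simp
  refine ⟨(c : K →+* K), fun σ x => ?_⟩
  -- for a given σ, use the count of F-algebra homs
  letI : Algebra F ℂ := (σ.comp (algebraMap F K)).toAlgebra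
  have hcard : Fintype.card (K →ₐ[F] ℂ) = 2 := by
    rw [AlgHom.card F K ℂ, hd]
  have halgmap : (algebraMap F ℂ) = σ.comp (algebraMap F K) := rfl
  have hcomm : ∀ r : F, (conjugate σ) ((algebraMap F K) r) = algebraMap F ℂ r := by
    intro r
    have hreal := hFreal (σ.comp (algebraMap F K))
    rw [ComplexEmbedding.isReal_iff] at hreal
    exact RingHom.congr_fun hreal r
  set σa : K →ₐ[F] ℂ := { toRingHom := σ, commutes' := fun r => rfl } with hσa
  set τa : K →ₐ[F] ℂ := { toRingHom := conjugate σ, commutes' := hcomm } with hτa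
  set ρa : K →ₐ[F] ℂ := σa.comp (AlgEquiv.toAlgHom c) with hρa
  have h1 : σa ≠ τa := by
    intro h
    apply hKnotreal σ
    rw [ComplexEmbedding.isReal_iff]
    ext y
    exact (DFunLike.congr_fun h y).symm
  have h2 : σa ≠ ρa := by
    intro h
    apply hcne
    ext y
    exact σ.injective (DFunLike.congr_fun h y).symm
  have h3 : τa = ρa := by
    by_contra h3
    have : 2 < Fintype.card (K →ₐ[F] ℂ) :=
      Fintype.two_lt_card_iff.mpr ⟨σa, τa, ρa, h1, h2, h3⟩
    omega
  have := DFunLike.congr_fun h3 x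
  exact (by simpa [hτa, hρa] using this : (starRingEnd ℂ) (σ x) = σa (c x))

variable {K : Type} [Field K] [NumberField K]

lemma unit_bound (hK : IsTotallyRealField K ∨ _root_.IsCMField K) (u : (𝓞 K)ˣ)
    (h : ∀ w : InfinitePlace K, |(mult w : ℝ) * Real.log (w ((u : 𝓞 K) : K))| < Real.log gr) :
    logEmb K u = 0 := by
  have hupos : ∀ w : InfinitePlace K, 0 < w ((u : 𝓞 K) : K) := fun w =>
    pos_iff.mpr (coe_unit_ne_zero u)
  have key : ∀ w : InfinitePlace K, w ((u : 𝓞 K) : K) = 1 := by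
    rcases hK with hTR | hCM
    · refine core u (fun w => ?_) (fun w => ?_)
      · have hre := isReal_iff.mp (hTR w)
        rw [ComplexEmbedding.isReal_iff] at hre
        have := RingHom.congr_fun hre ((u : 𝓞 K) : K)
        rw [ComplexEmbedding.conjugate_coe_eq] at this
        exact Complex.conj_eq_iff_im.mp this
      · have hm : mult w = 1 := if_pos (hTR w)
        have hw := h w
        rw [hm] at hw
        simp only [Nat.cast_one, one_mul] at hw
        exact log_window (hupos w) hw
    · obtain ⟨c, hc⟩ := cm_exists_conj hCM
      have hC := hCM.1
      set t : (𝓞 K)ˣ := u * Units.map (RingOfIntegers.mapRingHom c).toMonoidHom u with ht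
      have hct : ((t : 𝓞 K) : K) = ((u : 𝓞 K) : K) * c ((u : 𝓞 K) : K) := rfl
      have hembt : ∀ w : InfinitePlace K,
          embedding w ((t : 𝓞 K) : K) =
            embedding w ((u : 𝓞 K) : K) * (starRingEnd ℂ) (embedding w ((u : 𝓞 K) : K)) := by
        intro w
        rw [hct, map_mul, hc (embedding w)]
      have hwt : ∀ w : InfinitePlace K,
          w ((t : 𝓞 K) : K) = (w ((u : 𝓞 K) : K)) ^ 2 := by
        intro w
        rw [← norm_embedding_eq, hembt w, norm_mul, RCLike.norm_conj, norm_embedding_eq, sq]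
      have hcore := core t (fun w => ?_) (fun w => ?_)
      · intro w
        have := hcore w
        rw [hwt w] at this
        have hnn := le_of_lt (hupos w)
        nlinarith
      · rw [hembt w, Complex.mul_conj]
        simp
      · have hm : mult w = 2 := if_neg (not_isReal_iff_isComplex.mpr (hC w))
        have hw := h w
        rw [hm] at hw
        rw [hwt w]
        have hlog : Real.log ((w ((u : 𝓞 K) : K)) ^ 2) =
            (2 : ℝ) * Real.log (w ((u : 𝓞 K) : K)) := by
          rw [Real.log_pow]; norm_num
        refine log_window (pow_pos (hupos w) 2) ?_
        rw [hlog]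
        exact_mod_cast hw
  unfold logEmb
  funext w
  rw [key w, Real.log_one, mul_zero]
  rfl

open NumberField.Units NumberField.Units.dirichletUnitTheorem in
lemma sum_logEmb (u : (𝓞 K)ˣ) : ∑ w, logEmb K u w = 0 := by
  have h := congr_arg Real.log (prod_eq_abs_norm ((u : 𝓞 K) : K))
  rw [NumberField.Units.norm, Rat.cast_one, Real.log_one, Real.log_prod] at h
  · simp_rw [Real.log_pow] at h
    simpa [logEmb] using h
  · exact fun w _ => pow_ne_zero _ (ne_of_gt (pos_iff.mpr (coe_unit_ne_zero u)))

open NumberField.Units NumberField.Units.dirichletUnitTheorem ZSpan Submodule in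
lemma exists_cover : ∃ C : ℝ, ∀ v : InfinitePlace K → ℝ, ∑ w, v w = 0 →
    ∃ u : (𝓞 K)ˣ, ‖v - logEmb K u‖ ≤ C := by
  classical
  set b := Module.Free.chooseBasis ℤ (unitLattice K) with hb
  set b' := Module.Basis.ofZLatticeBasis ℝ (unitLattice K) b with hb'
  obtain ⟨M, hM⟩ := (fundamentalDomain_isBounded b').exists_norm_le
  set M' := max M 0 with hM'
  set n := Fintype.card (InfinitePlace K) with hn
  refine ⟨n * M' + M', fun v hv => ?_⟩
  set x : {w : InfinitePlace K // w ≠ w₀} → ℝ := fun w => v w.1 with hx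
  obtain ⟨ν, hν, -⟩ := exist_unique_vadd_mem_fundamentalDomain b' x
  have hmem : (ν : {w : InfinitePlace K // w ≠ w₀} → ℝ) ∈ unitLattice K := by
    exact (le_of_eq (Module.Basis.ofZLatticeBasis_span (L := unitLattice K) (b := b) ℝ)) ν.2
  obtain ⟨a, -, ha⟩ := Submodule.mem_map.mp hmem
  have ha' : logEmbedding K a = (ν : {w : InfinitePlace K // w ≠ w₀} → ℝ) := ha
  set u : (𝓞 K)ˣ := (a.toMul)⁻¹ with hu
  have hνa : ∀ w : {w : InfinitePlace K // w ≠ w₀},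
      (ν : {w : InfinitePlace K // w ≠ w₀} → ℝ) w = - ((mult w.1 : ℝ) * Real.log (w.1 ((u : 𝓞 K) : K))) := by
    intro w
    rw [← congr_fun ha' w]
    have : a = Additive.ofMul (u⁻¹) := by rw [hu]; simp
    rw [this, show Additive.ofMul u⁻¹ = -Additive.ofMul u from rfl, map_neg]
    simp [logEmbedding_component]
  set g : InfinitePlace K → ℝ := v - logEmb K u with hg
  have hbound : ∀ w : {w : InfinitePlace K // w ≠ w₀}, |g w.1| ≤ M' := by
    intro w
    have h0 : (ν +ᵥ x) w = (ν : {w : InfinitePlace K // w ≠ w₀} → ℝ) w + x w := rfl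
    have h1 : g w.1 = (ν +ᵥ x) w := by
      rw [h0, hνa w]
      show v w.1 - (mult w.1 : ℝ) * Real.log (w.1 ((u : 𝓞 K) : K)) = _
      ring
    rw [h1]
    have h2 := norm_le_pi_norm (ν +ᵥ x) w
    rw [Real.norm_eq_abs] at h2
    exact le_trans (le_trans h2 (hM _ hν)) (le_max_left _ _)
  have hgsum : ∑ w, g w = 0 := by
    rw [hg]
    simp only [Pi.sub_apply]
    rw [Finset.sum_sub_distrib, hv, sum_logEmb u, sub_zero]
  have hM'0 : 0 ≤ M' := le_max_right _ _
  have hw0 : |g w₀| ≤ n * M' := by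
    have : g w₀ = -∑ w ∈ Finset.univ.erase w₀, g w := by
      rw [eq_neg_iff_add_eq_zero, add_comm, Finset.sum_erase_add _ _ (Finset.mem_univ w₀)]
      exact hgsum
    rw [this, abs_neg]
    calc |∑ w ∈ Finset.univ.erase w₀, g w| ≤ ∑ w ∈ Finset.univ.erase w₀, |g w| :=
          Finset.abs_sum_le_sum_abs _ _
      _ ≤ ∑ _w ∈ Finset.univ.erase w₀, M' := by
          refine Finset.sum_le_sum fun w hw => ?_
          exact hbound ⟨w, Finset.ne_of_mem_erase hw⟩
      _ ≤ n * M' := by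
          rw [Finset.sum_const, nsmul_eq_mul]
          have hcard : (Finset.univ.erase (w₀ : InfinitePlace K)).card ≤ n := by
            refine le_trans (Finset.card_erase_le) ?_
            simp [hn]
          exact mul_le_mul_of_nonneg_right (by exact_mod_cast hcard) hM'0
  refine ⟨u, ?_⟩
  rw [show v - logEmb K u = g from rfl]
  refine (pi_norm_le_iff_of_nonneg (by positivity)).mpr fun w => ?_
  rw [Real.norm_eq_abs]
  by_cases hww : w = w₀
  · rw [hww]
    have : (0:ℝ) ≤ M' := hM'0
    nlinarith [hw0]
  · have := hbound ⟨w, hww⟩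
    have hnn : 0 ≤ (n : ℝ) * M' := by positivity
    simp only at this
    linarith


open NumberField.InfinitePlace

/-- If `K` is a totally real or CM number field of unit rank `r ≥ 1`, then
`ρ_∞(K) ≥ (1/2)·log((1+√5)/2)`. -/
theorem rhoInf_ge_golden_ratio_bound (K : Type) [Field K] [NumberField K]
    (hr : 1 ≤ NumberField.Units.rank K)
    (hK : IsTotallyRealField K ∨ _root_.IsCMField K) :
    (1 / 2 : ℝ) * Real.log ((1 + Real.sqrt 5) / 2) ≤ rhoInf K := by
  classical
  have hcard : 2 ≤ Fintype.card (InfinitePlace K) := by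
    have h1 : 1 ≤ Fintype.card (InfinitePlace K) := Fintype.card_pos
    have := hr
    unfold NumberField.Units.rank at this
    omega
  obtain ⟨w1, w2, hne⟩ := Fintype.exists_pair_of_one_lt_card (α := InfinitePlace K) (by omega)
  set c0 : ℝ := (1 / 2 : ℝ) * Real.log gr with hc0
  have hgrlog : 0 < Real.log gr := Real.log_pos gr_gt_one
  have hc0pos : 0 < c0 := by rw [hc0]; linarith
  set v : InfinitePlace K → ℝ := fun w => if w = w1 then c0 else if w = w2 then -c0 else 0 with hv
  have hv1 : v w1 = c0 := by rw [hv]; simp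
  have hv2 : v w2 = -c0 := by rw [hv]; simp [Ne.symm hne]
  have hsum : ∑ w, v w = 0 := by
    rw [← Finset.sum_subset (Finset.subset_univ ({w1, w2} : Finset (InfinitePlace K)))
      (fun x _ hx => ?_), Finset.sum_pair hne, hv1, hv2]
    · ring
    · simp only [Finset.mem_insert, Finset.mem_singleton] at hx
      push_neg at hx
      rw [hv]
      simp [hx.1, hx.2]
  -- lower bound for the distance from v to any lattice point
  have hinf : ∀ u : (𝓞 K)ˣ, c0 ≤ ‖v - logEmb K u‖ := by
    intro u
    by_contra hlt
    push_neg at hlt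
    have hcomp : ∀ w : InfinitePlace K, |v w - logEmb K u w| < c0 := by
      intro w
      have h2 := norm_le_pi_norm (v - logEmb K u) w
      rw [Real.norm_eq_abs] at h2
      exact lt_of_le_of_lt h2 hlt
    have hall : ∀ w : InfinitePlace K,
        |(mult w : ℝ) * Real.log (w ((u : 𝓞 K) : K))| < Real.log gr := by
      intro w
      have hw := hcomp w
      have hlogw : logEmb K u w = (mult w : ℝ) * Real.log (w ((u : 𝓞 K) : K)) := rfl
      rw [← hlogw]
      have h2c0 : Real.log gr = 2 * c0 := by rw [hc0]; ring
      by_cases h1 : w = w1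
      · rw [h1] at hw ⊢
        rw [hv1] at hw
        rw [abs_lt] at hw ⊢
        constructor <;> [linarith [hw.1, hw.2]; linarith [hw.1, hw.2]]
      · by_cases h2 : w = w2
        · rw [h2] at hw ⊢
          rw [hv2] at hw
          rw [abs_lt] at hw ⊢
          constructor <;> [linarith [hw.1, hw.2]; linarith [hw.1, hw.2]]
        · have hv0 : v w = 0 := by rw [hv]; simp [h1, h2]
          rw [hv0, zero_sub, abs_neg] at hw
          linarith
    have hzero := unit_bound hK u hall
    have := hcomp w1
    rw [hzero] at this
    simp only [Pi.zero_apply, sub_zero, hv1] at this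
    rw [abs_of_pos hc0pos] at this
    exact lt_irrefl _ this
  -- bddAbove of the range
  obtain ⟨C, hC⟩ := exists_cover (K := K)
  have hbdd : BddAbove (Set.range fun vv : {v : InfinitePlace K → ℝ // ∑ w, v w = 0} =>
      ⨅ u : (𝓞 K)ˣ, ‖(vv : InfinitePlace K → ℝ) - logEmb K u‖) := by
    refine ⟨C, ?_⟩
    rintro y ⟨vv, rfl⟩
    obtain ⟨u, hu⟩ := hC vv.1 vv.2
    refine ciInf_le_of_le ⟨0, ?_⟩ u hu
    rintro y ⟨u', rfl⟩
    exact norm_nonneg _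
  have hle : c0 ≤ ⨅ u : (𝓞 K)ˣ, ‖(v : InfinitePlace K → ℝ) - logEmb K u‖ :=
    le_ciInf hinf
  have := le_ciSup hbdd (⟨v, hsum⟩ : {v : InfinitePlace K → ℝ // ∑ w, v w = 0})
  calc (1 / 2 : ℝ) * Real.log ((1 + Real.sqrt 5) / 2) = c0 := rfl
    _ ≤ _ := le_trans hle this

end Aux
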